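/- Let t > 1, let G be a t-tough n-vertex graph, let C be a cycle of G whose complement's unique component H is complete of order λ, with W = N_C(V(H)) of size ω, such that any two vertices of W are at cycle-distance at least t + 3, each vertex u ∈ W has a set L_u⁺ of its t + 2 consecutive successors on C, and these sets L_u⁺ (u ∈ W) together with H are pairwise remote (no edges between any two). Then ω ≤ n/(2(t+1)) − 1/2. -/

import Mathlib

open SimpleGraph

/-- The number of components of `G − S`. -/
noncomputable def numComp {V : Type*} (G : SimpleGraph V) (S : Set V) : ℕ :=
  Nat.card ((G.induce Sᶜ).ConnectedComponent)

/-- `G` is `t`-tough: `|S| ≥ t · c(G − S)` for every `S` with `c(G − S) ≥ 2`. -/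
def Tough {V : Type*} [Fintype V] (t : ℝ) (G : SimpleGraph V) : Prop :=
  ∀ S : Finset V, 2 ≤ numComp G ↑S → t * (numComp G ↑S : ℝ) ≤ (S.card : ℝ)

/-- A `D_λ`-cycle: a cycle such that every component of `G − V(C)` has order
less than `λ`. -/
def IsDCycle {V : Type*} (G : SimpleGraph V) (lam : ℕ) {u : V} (c : G.Walk u u) : Prop :=
  c.IsCycle ∧
    ∀ K : (G.induce {x | x ∉ c.support}).ConnectedComponent, Nat.card K.supp < lam

/-- `c_λ(G − V(C))`: the number of components of `G − V(C)` of order at least `λ`. -/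
noncomputable def bigComps {V : Type*} (G : SimpleGraph V) (lam : ℕ) {u : V}
    (c : G.Walk u u) : ℕ :=
  Nat.card {K : (G.induce {x | x ∉ c.support}).ConnectedComponent //
    lam ≤ Nat.card K.supp}

/-- The distance from `x` to `y` along the oriented cycle `c`. -/
def cycDist {V : Type*} [DecidableEq V] {G : SimpleGraph V} {u : V}
    (c : G.Walk u u) (x y : V) : ℕ :=
  (c.support.idxOf y + c.length - c.support.idxOf x) % c.length

private lemma reach_invar' {V : Type*} {G : SimpleGraph V} {A P : Set V}
    (hstep : ∀ x y : V, x ∈ A → y ∈ A → G.Adj x y → x ∈ P → y ∈ P)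
    {a b : ↥A} (h : (G.induce A).Reachable a b) (ha : ↑a ∈ P) : ↑b ∈ P := by
  have key : ∀ (x y : ↥A) (w : (G.induce A).Walk x y), ↑x ∈ P → ↑y ∈ P := by
    intro x y w
    induction w with
    | nil => exact id
    | cons hxy p ih =>
        intro hx; exact ih (hstep _ _ (Subtype.coe_prop _) (Subtype.coe_prop _) hxy hx)
  obtain ⟨w⟩ := h
  exact key a b w ha

/-- Claim 5: with the sets `L_u⁺` of the `t+2` consecutive successors of the
neighbours of `H` on `C` pairwise remote and remote from `H`, one gets
`ω ≤ n/(2(t+1)) − 1/2`. -/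
theorem W_size_bound {V : Type*} [Fintype V] [DecidableEq V]
    (t : ℝ) (ht : 1 < t) (G : SimpleGraph V) (htough : Tough t G)
    (v0 : V) (c : G.Walk v0 v0) (hcyc : c.IsCycle)
    (Hset : Set V) (hHset : Hset = {x | x ∉ c.support})
    (hHne : Hset.Nonempty) (hHconn : (G.induce Hset).Connected)
    (hHcomplete : ∀ x ∈ Hset, ∀ y ∈ Hset, x ≠ y → G.Adj x y)
    (lam : ℕ) (hlam : lam = Nat.card Hset)
    (W : Set V) (hW : W = {x | x ∈ c.support ∧ ∃ y ∈ Hset, G.Adj x y})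
    (hfar : ∀ u ∈ W, ∀ w ∈ W, u ≠ w → t + 3 ≤ (cycDist c u w : ℝ))
    (L : V → Set V)
    (hL : ∀ u ∈ W, L u = {y | y ∈ c.support ∧
      1 ≤ cycDist c u y ∧ (cycDist c u y : ℝ) ≤ t + 2})
    (hLcard : ∀ u ∈ W, (Nat.card (L u) : ℝ) = t + 2)
    (hLremote : ∀ u ∈ W, ∀ w ∈ W, u ≠ w →
      Disjoint (L u) (L w) ∧ ∀ a ∈ L u, ∀ b ∈ L w, ¬ G.Adj a b)
    (hLHremote : ∀ u ∈ W,
      Disjoint (L u) Hset ∧ ∀ a ∈ L u, ∀ b ∈ Hset, ¬ G.Adj a b) :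
    (Nat.card W : ℝ) ≤ (Fintype.card V : ℝ) / (2 * (t + 1)) - 1 / 2 := by
  classical
  obtain ⟨h0, hh0⟩ := hHne
  have hh0ns : h0 ∉ c.support := by rw [hHset] at hh0; exact hh0
  -- Case split on W empty
  by_cases hWne : W.Nonempty
  · -- main case
    obtain ⟨u0, hu0⟩ := hWne
    -- nonempty L u
    have hLne : ∀ u ∈ W, (L u).Nonempty := by
      intro u hu
      have h1 : (0 : ℝ) < (Nat.card (L u) : ℝ) := by rw [hLcard u hu]; linarith
      have h2 : 0 < Nat.card (L u) := by exact_mod_cast h1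
      exact Set.nonempty_coe_sort.mp (Nat.card_pos_iff.mp h2).1
    -- Finsets
    set HF : Finset V := Hset.toFinset with hHF
    set WF : Finset V := W.toFinset with hWF
    set LF : V → Finset V := fun u => (L u).toFinset with hLF
    set AF : Finset V := HF ∪ WF.biUnion LF with hAF
    set A : Set V := ↑AF with hA
    have hmemA : ∀ x : V, x ∈ A ↔ x ∈ Hset ∨ ∃ u ∈ W, x ∈ L u := by
      intro x
      simp [hA, hAF, hHF, hWF, hLF, Set.mem_toFinset]
    -- step lemmas
    have hstepH : ∀ x y : V, x ∈ A → y ∈ A → G.Adj x y → x ∈ Hset → y ∈ Hset := by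
      intro x y _ hyA hadj hx
      rcases (hmemA y).mp hyA with hy | ⟨u, hu, hy⟩
      · exact hy
      · exact absurd hadj.symm ((hLHremote u hu).2 y hy x hx)
    have hstepL : ∀ u, u ∈ W → ∀ x y : V, x ∈ A → y ∈ A → G.Adj x y → x ∈ L u → y ∈ L u := by
      intro u hu x y _ hyA hadj hx
      rcases (hmemA y).mp hyA with hy | ⟨w, hw, hy⟩
      · exact absurd hadj ((hLHremote u hu).2 x hx y hy)
      · by_cases hne : w = u
        · exact hne ▸ hy
        · exact absurd hadj ((hLremote u hu w hw (Ne.symm hne)).2 x hx y hy)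
    -- choice points
    have hpt : ∀ u : {u : V // u ∈ W}, ∃ x, x ∈ L ↑u := fun u => hLne ↑u u.2
    choose pt hptmem using hpt
    have hptA : ∀ u : {u : V // u ∈ W}, pt u ∈ A := by
      intro u; exact (hmemA _).mpr (Or.inr ⟨↑u, u.2, hptmem u⟩)
    have hh0A : h0 ∈ A := (hmemA _).mpr (Or.inl hh0)
    -- injective map into components
    let f : Option {u : V // u ∈ W} → (G.induce A).ConnectedComponent :=
      fun o => match o with
      | none => (G.induce A).connectedComponentMk ⟨h0, hh0A⟩
      | some u => (G.induce A).connectedComponentMk ⟨pt u, hptA u⟩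
    have hfin : Function.Injective f := by
      intro o1 o2 heq
      match o1, o2 with
      | none, none => rfl
      | none, some u =>
        exfalso
        have hr := (SimpleGraph.ConnectedComponent.eq.mp heq)
        have := reach_invar' hstepH hr hh0
        exact Set.disjoint_left.mp (hLHremote ↑u u.2).1 (hptmem u) this
      | some u, none =>
        exfalso
        have hr := (SimpleGraph.ConnectedComponent.eq.mp heq)
        have := reach_invar' (hstepL ↑u u.2) hr (hptmem u)
        exact Set.disjoint_left.mp (hLHremote ↑u u.2).1 this hh0
      | some u, some w =>
        congr 1
        by_contra hne
        have hne' : (↑u : V) ≠ ↑w := by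
          intro h; exact hne (by ext; exact h)
        have hr := (SimpleGraph.ConnectedComponent.eq.mp heq)
        have := reach_invar' (hstepL ↑u u.2) hr (hptmem u)
        exact Set.disjoint_left.mp (hLremote ↑u u.2 ↑w w.2 hne').1 this (hptmem w)
    -- number of components lower bound
    have hcard_idx : Nat.card (Option {u : V // u ∈ W}) = Nat.card W + 1 :=
      Finite.card_option
    have hSset : ((↑(AFᶜ) : Set V))ᶜ = A := by
      rw [Finset.coe_compl, compl_compl]
    have hnumComp : numComp G ↑(AFᶜ) = Nat.card ((G.induce A).ConnectedComponent) := by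
      unfold numComp; rw [hSset]
    have hlow : Nat.card W + 1 ≤ numComp G ↑(AFᶜ) := by
      rw [hnumComp, ← hcard_idx]
      exact Nat.card_le_card_of_injective f hfin
    have hW1 : 1 ≤ Nat.card W := by
      have : (W : Set V).Nonempty := ⟨u0, hu0⟩
      have h2 : 0 < Nat.card W := Nat.card_pos_iff.mpr ⟨Set.nonempty_coe_sort.mpr this, Set.toFinite _ |>.to_subtype⟩
      omega
    have h2comp : 2 ≤ numComp G ↑(AFᶜ) := by omega
    have htineq := htough (AFᶜ) h2comp
    -- cardinalities
    have hdisj1 : Disjoint HF (WF.biUnion LF) := by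
      rw [Finset.disjoint_left]
      intro x hx hx2
      rw [Finset.mem_biUnion] at hx2
      obtain ⟨u, hu, hxu⟩ := hx2
      rw [hWF, Set.mem_toFinset] at hu
      rw [hLF] at hxu; simp only [Set.mem_toFinset] at hxu
      rw [hHF, Set.mem_toFinset] at hx
      exact Set.disjoint_left.mp (hLHremote u hu).1 hxu hx
    have hdisj2 : ∀ u ∈ WF, ∀ w ∈ WF, u ≠ w → Disjoint (LF u) (LF w) := by
      intro u hu w hw hne
      rw [hWF, Set.mem_toFinset] at hu hw
      rw [Finset.disjoint_left]
      intro x hx hx2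
      rw [hLF] at hx hx2; simp only [Set.mem_toFinset] at hx hx2
      exact Set.disjoint_left.mp (hLremote u hu w hw hne).1 hx hx2
    have hAFcard : AF.card = HF.card + ∑ u ∈ WF, (LF u).card := by
      rw [hAF, Finset.card_union_of_disjoint hdisj1, Finset.card_biUnion hdisj2]
    have hLFcard : ∀ u ∈ WF, ((LF u).card : ℝ) = t + 2 := by
      intro u hu
      rw [hWF, Set.mem_toFinset] at hu
      rw [← hLcard u hu]
      congr 1
      rw [hLF]
      simp only [Set.toFinset_card]
      rw [Nat.card_eq_fintype_card]
    have hWFcard : (WF.card : ℕ) = Nat.card W := by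
      rw [hWF, ← Set.ncard_eq_toFinset_card', Nat.card_coe_set_eq]
    have hHFcard : (HF.card : ℕ) = Nat.card Hset := by
      rw [hHF, ← Set.ncard_eq_toFinset_card', Nat.card_coe_set_eq]
    have hlam1 : 1 ≤ Nat.card Hset := by
      have h2 : 0 < Nat.card Hset := Nat.card_pos_iff.mpr ⟨Set.nonempty_coe_sort.mpr ⟨h0, hh0⟩, Set.toFinite _ |>.to_subtype⟩
      omega
    have hAFsum : (AF.card : ℝ) = (Nat.card Hset : ℝ) + (Nat.card W : ℝ) * (t + 2) := by
      rw [hAFcard]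
      push_cast
      rw [Finset.sum_congr rfl hLFcard, Finset.sum_const, nsmul_eq_mul, hHFcard]
      rw [← hWFcard]
    have hScard : ((AFᶜ).card : ℝ) = (Fintype.card V : ℝ) - (AF.card : ℝ) := by
      rw [Finset.card_compl]
      have : AF.card ≤ Fintype.card V := Finset.card_le_univ AF
      push_cast [Nat.cast_sub this]
      ring
    -- assemble
    have hnc : ((Nat.card W : ℝ) + 1) ≤ (numComp G ↑(AFᶜ) : ℝ) := by exact_mod_cast hlow
    have ht0 : (0:ℝ) < t := by linarith
    have hchain : t * ((Nat.card W : ℝ) + 1) ≤ (Fintype.card V : ℝ) - ((Nat.card Hset : ℝ) + (Nat.card W : ℝ) * (t + 2)) := by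
      calc t * ((Nat.card W : ℝ) + 1) ≤ t * (numComp G ↑(AFᶜ) : ℝ) := by
            apply mul_le_mul_of_nonneg_left hnc (le_of_lt ht0)
        _ ≤ ((AFᶜ).card : ℝ) := htineq
        _ = (Fintype.card V : ℝ) - (AF.card : ℝ) := hScard
        _ = _ := by rw [hAFsum]
    have hlamr : (1:ℝ) ≤ (Nat.card Hset : ℝ) := by exact_mod_cast hlam1
    have htp1 : (0:ℝ) < t + 1 := by linarith
    rw [div_sub' (by positivity), le_div_iff₀ (by positivity)]
    ring_nf
    nlinarith [hchain, hlamr, sq_nonneg t]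
  · -- W empty: G is disconnected, contradiction with toughness
    exfalso
    rw [Set.not_nonempty_iff_eq_empty] at hWne
    have hstep : ∀ x y : V, x ∈ (Set.univ : Set V) → y ∈ (Set.univ : Set V) →
        G.Adj x y → x ∈ Hset → y ∈ Hset := by
      intro x y _ _ hadj hx
      by_contra hy
      have hys : y ∈ c.support := by
        rw [hHset] at hy; simpa using hy
      have : y ∈ W := by
        rw [hW]; exact ⟨hys, x, hx, hadj.symm⟩
      rw [hWne] at this; exact this
    have hncu : numComp G ↑(∅ : Finset V) =
        Nat.card ((G.induce (Set.univ : Set V)).ConnectedComponent) := by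
      unfold numComp
      congr 1
      rw [Finset.coe_empty, Set.compl_empty]
    let f : Bool → (G.induce (Set.univ : Set V)).ConnectedComponent :=
      fun b => if b then (G.induce _).connectedComponentMk ⟨h0, trivial⟩
        else (G.induce _).connectedComponentMk ⟨v0, trivial⟩
    have hfin : Function.Injective f := by
      intro b1 b2 heq
      by_contra hne
      have hkey : ∀ hr : (G.induce (Set.univ : Set V)).Reachable ⟨h0, trivial⟩ ⟨v0, trivial⟩, False := by
        intro hr
        have := reach_invar' hstep hr hh0
        rw [hHset] at this
        exact this c.start_mem_support
      match b1, b2 with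
      | true, true => exact hne rfl
      | false, false => exact hne rfl
      | true, false =>
        simp only [f, if_pos, if_neg, Bool.false_eq_true, ite_true, ite_false] at heq
        exact hkey (SimpleGraph.ConnectedComponent.eq.mp heq)
      | false, true =>
        simp only [f, Bool.false_eq_true, ite_true, ite_false] at heq
        exact hkey (SimpleGraph.ConnectedComponent.eq.mp heq).symm
    have h2 : 2 ≤ numComp G ↑(∅ : Finset V) := by
      rw [hncu]
      have := Nat.card_le_card_of_injective f hfin
      simpa using this
    have := htough ∅ h2
    simp only [Finset.card_empty, Nat.cast_zero] at this
    have : (2:ℝ) ≤ (numComp G ↑(∅ : Finset V) : ℝ) := by exact_mod_cast h2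
    nlinarith [htough ∅ h2, this]
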